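/- In the Khalimsky plane, the COTS-distance between two pure points p = (i,j) and p' = (i',j') equals max(|i' - i|, |j' - j|). -/

import Mathlib

open Set

/-- The minimal open neighborhood of a point in a topological space. -/
def minOpenNhd {X : Type*} (t : TopologicalSpace X) (x : X) : Set X :=
  ⋂₀ {U : Set X | t.IsOpen U ∧ x ∈ U}

/-- The specialization-style preorder: `x ≤ y` iff `U_x ⊆ U_y`. -/
def specLE {X : Type*} (t : TopologicalSpace X) (x y : X) : Prop :=
  minOpenNhd t x ⊆ minOpenNhd t y

/-- Two points are adjacent if distinct and comparable in the specialization order. -/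
def Adjacent {X : Type*} (t : TopologicalSpace X) (x y : X) : Prop :=
  x ≠ y ∧ (specLE t x y ∨ specLE t y x)

/-- The adjacency set of a point. -/
def adjSet {X : Type*} (t : TopologicalSpace X) (x : X) : Set X := {y | Adjacent t x y}

/-- A COTS: a connected space in which every 3-point subset has a point separating
the other two. -/
def IsCOTS {X : Type*} (t : TopologicalSpace X) : Prop :=
  @ConnectedSpace X t ∧
    ∀ Y : Set X, Y.ncard = 3 →
      ∃ y ∈ Y, ∃ a ∈ Y \ {y}, ∃ b ∈ Y \ {y},
        @connectedComponentIn X t {y}ᶜ a ≠ @connectedComponentIn X t {y}ᶜ b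

/-- An endpoint of a COTS: a point with at most one neighbor. -/
def IsEndpoint {X : Type*} (t : TopologicalSpace X) (x : X) : Prop :=
  (adjSet t x).ncard ≤ 1

/-- A COTS-path: the continuous image of a finite COTS. -/
def IsCOTSPath {Y : Type*} (tY : TopologicalSpace Y) (P : Set Y) : Prop :=
  ∃ (C : Type) (tC : TopologicalSpace C), Finite C ∧ IsCOTS tC ∧
    ∃ f : C → Y, @Continuous C Y tC tY f ∧ Set.range f = P

/-- A COTS-path with prescribed start and end points. -/
def IsCOTSPathFromTo {Y : Type*} (tY : TopologicalSpace Y) (P : Set Y) (a b : Y) : Prop :=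
  ∃ (C : Type) (tC : TopologicalSpace C), Finite C ∧ IsCOTS tC ∧
    ∃ f : C → Y, @Continuous C Y tC tY f ∧ Set.range f = P ∧
      ∃ c₀ c₁ : C, IsEndpoint tC c₀ ∧ IsEndpoint tC c₁ ∧ f c₀ = a ∧ f c₁ = b

/-- A COTS-arc: the homeomorphic image of a finite COTS. -/
def IsCOTSArc {Y : Type*} (tY : TopologicalSpace Y) (A : Set Y) : Prop :=
  ∃ (C : Type) (tC : TopologicalSpace C), Finite C ∧ IsCOTS tC ∧
    ∃ f : C → Y, @Topology.IsEmbedding C Y tC tY f ∧ Set.range f = A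

/-- A COTS-arc with prescribed endpoints. -/
def IsCOTSArcFromTo {Y : Type*} (tY : TopologicalSpace Y) (A : Set Y) (a b : Y) : Prop :=
  ∃ (C : Type) (tC : TopologicalSpace C), Finite C ∧ IsCOTS tC ∧
    ∃ f : C → Y, @Topology.IsEmbedding C Y tC tY f ∧ Set.range f = A ∧
      ∃ c₀ c₁ : C, IsEndpoint tC c₀ ∧ IsEndpoint tC c₁ ∧ f c₀ = a ∧ f c₁ = b

/-- The COTS-distance: one less than the minimal cardinality of a COTS-arc
joining two points (`⊤` if there is no such arc). -/
noncomputable def cotsDist {X : Type*} (t : TopologicalSpace X) (x y : X) : ℕ∞ :=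
  sInf {n : ℕ∞ | ∃ A : Set X, IsCOTSArcFromTo t A x y ∧ (A.ncard : ℕ∞) = n + 1}

/-- The Khalimsky topology on ℤ. -/
def khal : TopologicalSpace ℤ :=
  TopologicalSpace.generateFrom
    {s : Set ℤ | ∃ n : ℤ, (Odd n ∧ s = {n}) ∨ (Even n ∧ s = {n - 1, n, n + 1})}

/-- The Khalimsky plane topology on ℤ × ℤ. -/
def khalPlane : TopologicalSpace (ℤ × ℤ) := @instTopologicalSpaceProd ℤ ℤ khal khal

/-- A point of the Khalimsky plane is pure if its coordinates have the same parity. -/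
def IsPurePt (p : ℤ × ℤ) : Prop := (Even p.1 ∧ Even p.2) ∨ (Odd p.1 ∧ Odd p.2)

/-- A digital Jordan curve: a finite set of at least 4 points such that removing
any point leaves a COTS-arc. -/
def IsJordanCurve {X : Type*} (t : TopologicalSpace X) (J : Set X) : Prop :=
  J.Finite ∧ 4 ≤ J.ncard ∧ ∀ j ∈ J, IsCOTSArc t (J \ {j})

/-- The interior of a digital Jordan curve in the Khalimsky plane: the union of the
finite (bounded) connected components of its complement. -/
def jInterior (J : Set (ℤ × ℤ)) : Set (ℤ × ℤ) :=
  ⋃₀ {S | ∃ p ∉ J, S = @connectedComponentIn _ khalPlane Jᶜ p ∧ S.Finite}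


namespace KAux

def kNhd (n : ℤ) : Set ℤ := if Even n then {n - 1, n, n + 1} else {n}

lemma kNhd_even {n : ℤ} (h : Even n) : kNhd n = {n - 1, n, n + 1} := if_pos h

lemma kNhd_odd {n : ℤ} (h : ¬ Even n) : kNhd n = {n} := if_neg h

lemma mem_kNhd_self (n : ℤ) : n ∈ kNhd n := by
  unfold kNhd; split <;> simp

lemma kNhd_subset_Icc (n : ℤ) : kNhd n ⊆ Set.Icc (n - 1) (n + 1) := by
  unfold kNhd; split <;> intro x hx <;> simp at hx <;> [skip; subst hx] <;>
    first
    | (constructor <;> omega)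
    | (rcases hx with h | h | h <;> subst h <;> constructor <;> omega)

lemma isOpen_kNhd (n : ℤ) : khal.IsOpen (kNhd n) := by
  by_cases h : Even n
  · rw [kNhd_even h]
    exact TopologicalSpace.GenerateOpen.basic _ ⟨n, Or.inr ⟨h, rfl⟩⟩
  · rw [kNhd_odd h]
    exact TopologicalSpace.GenerateOpen.basic _ ⟨n, Or.inl ⟨Int.not_even_iff_odd.mp h, rfl⟩⟩

lemma kNhd_subset_open {s : Set ℤ} (hs : khal.IsOpen s) : ∀ n ∈ s, kNhd n ⊆ s := by
  induction hs with
  | basic u hu =>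
    intro n hn
    obtain ⟨m, ⟨hm, rfl⟩ | ⟨hm, rfl⟩⟩ := hu
    · simp only [Set.mem_singleton_iff] at hn; subst hn
      rw [kNhd_odd (Int.not_even_iff_odd.mpr hm)]
    · rcases hn with h | h | h
      · subst h
        rw [kNhd_odd (by simp [Int.even_sub_one, Int.not_even_iff_odd, Int.not_even_iff_odd, hm])]
        rw [Set.singleton_subset_iff]; exact Set.mem_insert _ _
      · subst h
        rw [kNhd_even hm]
      · rw [Set.mem_singleton_iff] at h; subst h
        rw [kNhd_odd (by simp [Int.even_add_one, hm])]
        rw [Set.singleton_subset_iff]; right; right; rfl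
  | univ => intro n _; exact Set.subset_univ _
  | inter u v _ _ ihu ihv => intro n hn; exact Set.subset_inter (ihu n hn.1) (ihv n hn.2)
  | sUnion S _ ih =>
    rintro n ⟨u, hu, hn⟩
    exact (ih u hu n hn).trans (Set.subset_sUnion_of_mem hu)

lemma minOpenNhd_khal (n : ℤ) : minOpenNhd khal n = kNhd n := by
  apply subset_antisymm
  · exact Set.sInter_subset_of_mem ⟨isOpen_kNhd n, mem_kNhd_self n⟩
  · intro x hx U hU
    exact kNhd_subset_open hU.1 n hU.2 hx


lemma minOpenNhd_subset {X : Type*} {t : TopologicalSpace X} {U : Set X} (hU : t.IsOpen U)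
    {x : X} (hx : x ∈ U) : minOpenNhd t x ⊆ U :=
  Set.sInter_subset_of_mem ⟨hU, hx⟩

lemma mem_minOpenNhd_self {X : Type*} (t : TopologicalSpace X) (x : X) :
    x ∈ minOpenNhd t x := fun _ hU => hU.2

def kNhd2 (p : ℤ × ℤ) : Set (ℤ × ℤ) := kNhd p.1 ×ˢ kNhd p.2

lemma mem_kNhd2_self (p : ℤ × ℤ) : p ∈ kNhd2 p := ⟨mem_kNhd_self _, mem_kNhd_self _⟩

lemma isOpen_kNhd2 (p : ℤ × ℤ) : khalPlane.IsOpen (kNhd2 p) :=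
  @IsOpen.prod ℤ ℤ khal khal _ _ (isOpen_kNhd p.1) (isOpen_kNhd p.2)

lemma minOpenNhd_khalPlane (p : ℤ × ℤ) : minOpenNhd khalPlane p = kNhd2 p := by
  apply subset_antisymm
  · exact Set.sInter_subset_of_mem ⟨isOpen_kNhd2 p, mem_kNhd2_self p⟩
  · intro x hx U hU
    obtain ⟨u, v, hu, hv, h1, h2, huv⟩ :=
      (@isOpen_prod_iff ℤ ℤ khal khal U).mp hU.1 p.1 p.2 hU.2
    exact huv ⟨kNhd_subset_open hu p.1 h1 hx.1, kNhd_subset_open hv p.2 h2 hx.2⟩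

lemma isOpen_minOpenNhd_khalPlane (p : ℤ × ℤ) : khalPlane.IsOpen (minOpenNhd khalPlane p) := by
  rw [minOpenNhd_khalPlane]; exact isOpen_kNhd2 p

lemma specLE_khal_iff (a b : ℤ) : specLE khal a b ↔ kNhd a ⊆ kNhd b := by
  unfold specLE; rw [minOpenNhd_khal, minOpenNhd_khal]

lemma specLE_plane_iff (x y : ℤ × ℤ) :
    specLE khalPlane x y ↔ specLE khal x.1 y.1 ∧ specLE khal x.2 y.2 := by
  unfold specLE
  rw [minOpenNhd_khalPlane, minOpenNhd_khalPlane, minOpenNhd_khal, minOpenNhd_khal,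
    minOpenNhd_khal, minOpenNhd_khal]
  unfold kNhd2
  rw [Set.prod_subset_prod_iff]
  constructor
  · rintro (h | h | h)
    · exact h
    · exact absurd h (Set.nonempty_iff_ne_empty.mp ⟨_, mem_kNhd_self _⟩)
    · exact absurd h (Set.nonempty_iff_ne_empty.mp ⟨_, mem_kNhd_self _⟩)
  · exact Or.inl

lemma specLE_khal_abs {a b : ℤ} (h : specLE khal a b) : (a - b).natAbs ≤ 1 := by
  rw [specLE_khal_iff] at h
  have := kNhd_subset_Icc b (h (mem_kNhd_self a))
  simp [Set.mem_Icc] at this; omega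

lemma specLE_plane_abs {x y : ℤ × ℤ} (h : specLE khalPlane x y) :
    (x.1 - y.1).natAbs ≤ 1 ∧ (x.2 - y.2).natAbs ≤ 1 := by
  rw [specLE_plane_iff] at h
  exact ⟨specLE_khal_abs h.1, specLE_khal_abs h.2⟩

lemma specLE_khal_of_odd_even {a b : ℤ} (ha : ¬ Even a) (hb : Even b)
    (hab : (a - b).natAbs ≤ 1) : specLE khal a b := by
  rw [specLE_khal_iff, kNhd_odd ha, kNhd_even hb, Set.singleton_subset_iff]
  have : a ≠ b := by rintro rfl; exact ha hb
  simp only [Set.mem_insert_iff, Set.mem_singleton_iff]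
  omega

lemma specLE_of_mem_minOpenNhd {x y : ℤ × ℤ} (h : y ∈ minOpenNhd khalPlane x) :
    specLE khalPlane y x :=
  minOpenNhd_subset (isOpen_minOpenNhd_khalPlane x) h

lemma mem_open_of_specLE {x y : ℤ × ℤ} (h : specLE khalPlane x y) {o : Set (ℤ × ℤ)}
    (ho : khalPlane.IsOpen o) (hy : y ∈ o) : x ∈ o :=
  minOpenNhd_subset ho hy (h (mem_minOpenNhd_self _ _))

lemma pair_preconnected {x y : ℤ × ℤ} (h : specLE khalPlane x y) :
    @IsPreconnected _ khalPlane {x, y} := by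
  rintro u v hu hv hcov ⟨a, hase, hau⟩ ⟨b, hbse, hbv⟩
  have hxm : x ∈ ({x, y} : Set (ℤ × ℤ)) := Set.mem_insert _ _
  rcases hcov (Set.mem_insert_iff.mpr (Or.inr rfl)) with hyu | hyv
  · have hxu : x ∈ u := mem_open_of_specLE h hu hyu
    rcases hbse with rfl | rfl
    · exact ⟨b, hxm, hxu, hbv⟩
    · exact ⟨x, hxm, hxu, mem_open_of_specLE h hv hbv⟩
  · have hxv : x ∈ v := mem_open_of_specLE h hv hyv
    rcases hase with rfl | rfl
    · exact ⟨a, hxm, hau, hxv⟩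
    · exact ⟨x, hxm, mem_open_of_specLE h hu hau, hxv⟩

def cheb (x y : ℤ × ℤ) : ℕ := max (x.1 - y.1).natAbs (x.2 - y.2).natAbs

def kstep (S : Set (ℤ × ℤ)) (x y : ℤ × ℤ) : Prop :=
  y ∈ S ∧ (specLE khalPlane x y ∨ specLE khalPlane y x)

lemma chain_of_preconnected {S : Set (ℤ × ℤ)} (hS : @IsPreconnected _ khalPlane S)
    {p q : ℤ × ℤ} (hp : p ∈ S) (hq : q ∈ S) : Relation.ReflTransGen (kstep S) p q := by
  by_contra hq'
  set T := {z ∈ S | Relation.ReflTransGen (kstep S) p z} with hT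
  have hu : khalPlane.IsOpen (⋃ z ∈ T, minOpenNhd khalPlane z) :=
    @isOpen_biUnion _ _ khalPlane _ _ fun z _ => isOpen_minOpenNhd_khalPlane z
  have hv : khalPlane.IsOpen (⋃ z ∈ S \ T, minOpenNhd khalPlane z) :=
    @isOpen_biUnion _ _ khalPlane _ _ fun z _ => isOpen_minOpenNhd_khalPlane z
  have hcov : S ⊆ (⋃ z ∈ T, minOpenNhd khalPlane z) ∪ ⋃ z ∈ S \ T, minOpenNhd khalPlane z := by
    intro z hz
    by_cases hzT : z ∈ T
    · exact Or.inl (Set.mem_biUnion hzT (mem_minOpenNhd_self _ _))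
    · exact Or.inr (Set.mem_biUnion ⟨hz, hzT⟩ (mem_minOpenNhd_self _ _))
  obtain ⟨r, hrS, hru, hrv⟩ := hS _ _ hu hv hcov
    ⟨p, hp, Set.mem_biUnion ⟨hp, Relation.ReflTransGen.refl⟩ (mem_minOpenNhd_self _ _)⟩
    ⟨q, hq, Set.mem_biUnion ⟨hq, fun h => hq' h.2⟩ (mem_minOpenNhd_self _ _)⟩
  obtain ⟨z₁, hz₁, hr₁⟩ := Set.mem_iUnion₂.mp hru
  obtain ⟨z₂, hz₂, hr₂⟩ := Set.mem_iUnion₂.mp hrv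
  have hrT : r ∈ T :=
    ⟨hrS, hz₁.2.tail ⟨hrS, Or.inr (specLE_of_mem_minOpenNhd hr₁)⟩⟩
  exact hz₂.2 ⟨hz₂.1, hrT.2.tail ⟨hz₂.1, Or.inl (specLE_of_mem_minOpenNhd hr₂)⟩⟩

lemma cheb_step {S : Set (ℤ × ℤ)} {x y : ℤ × ℤ} (h : kstep S x y) (p : ℤ × ℤ) :
    cheb p y ≤ cheb p x + 1 := by
  rcases h.2 with hs | hs <;> have := specLE_plane_abs hs <;> unfold cheb <;> omega

lemma chain_ivt {S : Set (ℤ × ℤ)} {p : ℤ × ℤ} (hp : p ∈ S) {q : ℤ × ℤ}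
    (hq : Relation.ReflTransGen (kstep S) p q) :
    ∀ k ≤ cheb p q, ∃ x ∈ S, cheb p x = k := by
  induction hq with
  | refl =>
    intro k hk
    have h0 : cheb p p = 0 := by unfold cheb; simp
    exact ⟨p, hp, by omega⟩
  | tail hab hbc ih =>
    rename_i b c
    intro k hk
    by_cases hkb : k ≤ cheb p b
    · exact ih k hkb
    · have := cheb_step hbc p
      exact ⟨c, hbc.1, by omega⟩

lemma card_lower {S : Set (ℤ × ℤ)} (hfin : S.Finite) (hS : @IsPreconnected _ khalPlane S)
    {p q : ℤ × ℤ} (hp : p ∈ S) (hq : q ∈ S) : cheb p q + 1 ≤ S.ncard := by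
  have hiv := chain_ivt hp (chain_of_preconnected hS hp hq)
  have hsub : Set.Iic (cheb p q) ⊆ (fun x => cheb p x) '' S := by
    intro k hk
    obtain ⟨x, hx, hcx⟩ := hiv k hk
    exact ⟨x, hx, hcx⟩
  calc cheb p q + 1 = (Set.Iic (cheb p q)).ncard := by
        rw [← Finset.coe_Iic, Set.ncard_coe_finset, Nat.card_Iic]
    _ ≤ ((fun x => cheb p x) '' S).ncard := Set.ncard_le_ncard hsub (hfin.image _)
    _ ≤ S.ncard := Set.ncard_image_le hfin

lemma specLE_refl {X : Type*} (t : TopologicalSpace X) (x : X) : specLE t x x := subset_rfl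

def gseg (c a : ℤ) (n : ℕ) : ℤ := c + max (-(n : ℤ)) (min (n : ℤ) a)

lemma gseg_zero (c a : ℤ) : gseg c a 0 = c := by unfold gseg; omega

lemma gseg_of_ge (c a : ℤ) {n : ℕ} (h : a.natAbs ≤ n) : gseg c a n = c + a := by
  unfold gseg; omega

lemma gseg_comp_odd {c : ℤ} {n : ℕ} (a : ℤ) (h : ¬ Even (c + n)) :
    specLE khal (gseg c a n) (gseg c a (n + 1)) := by
  rcases (show gseg c a n = gseg c a (n + 1) ∨ (¬ Even (gseg c a n) ∧ Even (gseg c a (n + 1)) ∧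
      ((gseg c a n) - (gseg c a (n + 1))).natAbs ≤ 1) by
      rw [Int.even_iff, Int.even_iff]; rw [Int.even_iff] at h; unfold gseg; push_cast; omega)
    with h1 | ⟨h1, h2, h3⟩
  · rw [h1]; exact specLE_refl _ _
  · exact specLE_khal_of_odd_even h1 h2 h3

lemma gseg_comp_even {c : ℤ} {n : ℕ} (a : ℤ) (h : Even (c + n)) :
    specLE khal (gseg c a (n + 1)) (gseg c a n) := by
  rcases (show gseg c a n = gseg c a (n + 1) ∨ (¬ Even (gseg c a (n + 1)) ∧ Even (gseg c a n) ∧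
      ((gseg c a (n + 1)) - (gseg c a n)).natAbs ≤ 1) by
      rw [Int.even_iff, Int.even_iff]; rw [Int.even_iff] at h; unfold gseg; push_cast; omega)
    with h1 | ⟨h1, h2, h3⟩
  · rw [h1]; exact specLE_refl _ _
  · exact specLE_khal_of_odd_even h1 h2 h3

def pathF (p p' : ℤ × ℤ) (n : ℕ) : ℤ × ℤ :=
  (gseg p.1 (p'.1 - p.1) n, gseg p.2 (p'.2 - p.2) n)

lemma pathF_zero (p p' : ℤ × ℤ) : pathF p p' 0 = p := by
  unfold pathF; rw [gseg_zero, gseg_zero]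

lemma pathF_of_ge (p p' : ℤ × ℤ) {n : ℕ} (h1 : (p'.1 - p.1).natAbs ≤ n)
    (h2 : (p'.2 - p.2).natAbs ≤ n) : pathF p p' n = p' := by
  unfold pathF; rw [gseg_of_ge _ _ h1, gseg_of_ge _ _ h2]; simp

lemma pathF_comp (p p' : ℤ × ℤ) (hp : IsPurePt p) (n : ℕ) :
    specLE khalPlane (pathF p p' n) (pathF p p' (n + 1)) ∨
      specLE khalPlane (pathF p p' (n + 1)) (pathF p p' n) := by
  have hpar : Even (p.1 + n) ↔ Even (p.2 + n) := by
    rcases hp with ⟨h1, h2⟩ | ⟨h1, h2⟩ <;>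
      simp only [Int.even_iff, Int.odd_iff] at h1 h2 ⊢ <;> omega
  by_cases h : Even (p.1 + n)
  · right
    rw [specLE_plane_iff]
    exact ⟨gseg_comp_even _ h, gseg_comp_even _ (hpar.mp h)⟩
  · left
    rw [specLE_plane_iff]
    exact ⟨gseg_comp_odd _ h, gseg_comp_odd _ fun he => h (hpar.mpr he)⟩

lemma pathF_preconn (p p' : ℤ × ℤ) (hp : IsPurePt p) (k : ℕ) :
    @IsPreconnected _ khalPlane (pathF p p' '' Set.Iic k) := by
  induction k with
  | zero =>
    have : Set.Iic (0 : ℕ) = {0} := by ext n; simp [Nat.le_zero]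
    rw [this, Set.image_singleton]
    exact @isPreconnected_singleton _ khalPlane _
  | succ k ih =>
    have hset : pathF p p' '' Set.Iic (k + 1) =
        (pathF p p' '' Set.Iic k) ∪ {pathF p p' k, pathF p p' (k + 1)} := by
      ext z; constructor
      · rintro ⟨n, hn, rfl⟩
        rcases Nat.lt_or_ge n (k + 1) with h | h
        · exact Or.inl ⟨n, Set.mem_Iic.mpr (by omega), rfl⟩
        · have : n = k + 1 := by simpa using Nat.le_antisymm hn h
          subst this; exact Or.inr (Or.inr rfl)
      · rintro (⟨n, hn, rfl⟩ | rfl | rfl)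
        · exact ⟨n, Set.mem_Iic.mpr (le_trans (Set.mem_Iic.mp hn) (Nat.le_succ k)), rfl⟩
        · exact ⟨k, Set.mem_Iic.mpr (by omega), rfl⟩
        · exact ⟨k + 1, Set.mem_Iic.mpr (le_refl _), rfl⟩
    rw [hset]
    refine @IsPreconnected.union _ khalPlane (pathF p p' k) _ _ ⟨k, Set.mem_Iic.mpr (le_refl _), rfl⟩
      (Or.inl rfl) ih ?_
    rcases pathF_comp p p' hp k with h | h
    · exact pair_preconnected h
    · rw [Set.pair_comm]; exact pair_preconnected h

lemma khal_isOpen_biUnion {β : Type*} {s : Set β} {g : β → Set ℤ}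
    (h : ∀ i ∈ s, khal.IsOpen (g i)) : khal.IsOpen (⋃ i ∈ s, g i) := by
  letI := khal
  exact isOpen_biUnion h

lemma half_open_lt (t : ℤ) : ∃ V : Set ℤ, khal.IsOpen V ∧ V ∩ {t}ᶜ = Set.Iio t := by
  refine ⟨⋃ z ∈ Set.Iio t, kNhd z, khal_isOpen_biUnion fun z _ => isOpen_kNhd z, ?_⟩
  ext x; constructor
  · rintro ⟨hx, hxt⟩
    obtain ⟨z, hz, hxz⟩ := Set.mem_iUnion₂.mp hx
    have h2 := kNhd_subset_Icc z hxz
    simp only [Set.mem_Icc] at h2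
    simp only [Set.mem_compl_iff, Set.mem_singleton_iff] at hxt
    simp only [Set.mem_Iio] at hz ⊢
    omega
  · intro hx
    exact ⟨Set.mem_biUnion hx (mem_kNhd_self x), ne_of_lt hx⟩

lemma half_open_gt (t : ℤ) : ∃ V : Set ℤ, khal.IsOpen V ∧ V ∩ {t}ᶜ = Set.Ioi t := by
  refine ⟨⋃ z ∈ Set.Ioi t, kNhd z, khal_isOpen_biUnion fun z _ => isOpen_kNhd z, ?_⟩
  ext x; constructor
  · rintro ⟨hx, hxt⟩
    obtain ⟨z, hz, hxz⟩ := Set.mem_iUnion₂.mp hx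
    have h2 := kNhd_subset_Icc z hxz
    simp only [Set.mem_Icc] at h2
    simp only [Set.mem_compl_iff, Set.mem_singleton_iff] at hxt
    simp only [Set.mem_Ioi] at hz ⊢
    omega
  · intro hx
    exact ⟨Set.mem_biUnion hx (mem_kNhd_self x), (ne_of_lt hx).symm⟩

lemma sep_aux {C : Type} (tC : TopologicalSpace C) (h : C → ℤ)
    (hc : @Continuous _ _ tC khal h) (hinj : Function.Injective h)
    {a b c : C} (hab : h a < h b) (hbc : h b < h c) :
    @connectedComponentIn _ tC {b}ᶜ a ≠ @connectedComponentIn _ tC {b}ᶜ c := by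
  letI : TopologicalSpace C := tC
  letI : TopologicalSpace ℤ := khal
  obtain ⟨V₁, hV₁, hV₁eq⟩ := half_open_lt (h b)
  obtain ⟨V₂, hV₂, hV₂eq⟩ := half_open_gt (h b)
  have hIio : Set.Iio (h b) ⊆ V₁ := by rw [← hV₁eq]; exact Set.inter_subset_left
  have hIoi : Set.Ioi (h b) ⊆ V₂ := by rw [← hV₂eq]; exact Set.inter_subset_left
  intro heq
  have hab' : a ≠ b := fun e => absurd (congrArg h e) (ne_of_lt hab)
  have hcb' : c ≠ b := fun e => absurd (congrArg h e) (ne_of_gt hbc)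
  have haK : a ∈ @connectedComponentIn _ tC {b}ᶜ a := @mem_connectedComponentIn _ tC _ _ hab'
  have hcK : c ∈ @connectedComponentIn _ tC {b}ᶜ a := by
    rw [heq]; exact @mem_connectedComponentIn _ tC _ _ hcb'
  have hKsub : @connectedComponentIn _ tC {b}ᶜ a ⊆ {b}ᶜ :=
    @connectedComponentIn_subset _ tC _ _
  have hKconn : @IsPreconnected _ tC (@connectedComponentIn _ tC {b}ᶜ a) :=
    @isPreconnected_connectedComponentIn _ tC _ _
  have hne : ∀ x ∈ @connectedComponentIn _ tC {b}ᶜ a, h x ≠ h b :=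
    fun x hx e => (hKsub hx) (hinj e)
  obtain ⟨r, hrK, hr₁, hr₂⟩ := hKconn (h ⁻¹' V₁) (h ⁻¹' V₂)
    (hc.isOpen_preimage V₁ hV₁) (hc.isOpen_preimage V₂ hV₂)
    (fun x hx => by
      rcases lt_or_gt_of_ne (hne x hx) with hlt | hgt
      · exact Or.inl (hIio hlt)
      · exact Or.inr (hIoi hgt))
    ⟨a, haK, hIio hab⟩ ⟨c, hcK, hIoi hbc⟩
  have h1 : h r ∈ V₁ ∩ {h b}ᶜ := ⟨hr₁, hne r hrK⟩
  have h2 : h r ∈ V₂ ∩ {h b}ᶜ := ⟨hr₂, hne r hrK⟩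
  rw [hV₁eq] at h1
  rw [hV₂eq] at h2
  exact absurd (lt_trans (Set.mem_Iio.mp h1) (Set.mem_Ioi.mp h2)) (lt_irrefl _)

lemma minOpenNhd_induced {C : Type} (f : C → ℤ × ℤ) (x : C) :
    minOpenNhd (khalPlane.induced f) x = f ⁻¹' minOpenNhd khalPlane (f x) := by
  letI : TopologicalSpace (ℤ × ℤ) := khalPlane
  apply subset_antisymm
  · exact minOpenNhd_subset (isOpen_induced (isOpen_minOpenNhd_khalPlane (f x)))
      (mem_minOpenNhd_self khalPlane (f x))
  · intro y hy U hU
    obtain ⟨V, hV, rfl⟩ := isOpen_induced_iff.mp hU.1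
    exact minOpenNhd_subset hV hU.2 hy

lemma adj_cheb {C : Type} (f : C → ℤ × ℤ) {x y : C}
    (h : Adjacent (khalPlane.induced f) x y) : cheb (f x) (f y) ≤ 1 := by
  have key : ∀ u v : C, specLE (khalPlane.induced f) u v → cheb (f u) (f v) ≤ 1 := by
    intro u v hs
    have := hs (mem_minOpenNhd_self _ u)
    rw [minOpenNhd_induced, Set.mem_preimage, minOpenNhd_khalPlane] at this
    have h1 := kNhd_subset_Icc (f v).1 this.1
    have h2 := kNhd_subset_Icc (f v).2 this.2
    simp only [Set.mem_Icc] at h1 h2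
    unfold cheb; omega
  rcases h.2 with hs | hs
  · exact key x y hs
  · have := key y x hs
    unfold cheb at this ⊢; omega

lemma middle3 {n : ℕ} {x y z : Fin n} (h1 : x ≠ y) (h2 : x ≠ z) (h3 : y ≠ z) :
    ∃ a b c : Fin n, a < b ∧ b < c ∧ ({a, b, c} : Set (Fin n)) = {x, y, z} := by
  have e1 : (x : ℕ) ≠ y := fun e => h1 (Fin.ext e)
  have e2 : (x : ℕ) ≠ z := fun e => h2 (Fin.ext e)
  have e3 : (y : ℕ) ≠ z := fun e => h3 (Fin.ext e)
  rcases Nat.lt_or_ge x y with a1 | a1 <;> rcases Nat.lt_or_ge x z with a2 | a2 <;>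
    rcases Nat.lt_or_ge y z with a3 | a3
  · exact ⟨x, y, z, a1, a3, rfl⟩
  · exact ⟨x, z, y, a2, by omega, by ext w; simp; tauto⟩
  · exact ⟨x, y, z, a1, by omega, rfl⟩
  · exact ⟨z, x, y, by omega, a1, by ext w; simp; tauto⟩
  · exact ⟨y, x, z, by omega, a2, by ext w; simp; tauto⟩
  · exact ⟨y, x, z, by omega, by omega, by ext w; simp; tauto⟩
  · exact ⟨y, z, x, by omega, by omega, by ext w; simp; tauto⟩
  · exact ⟨z, y, x, by omega, by omega, by ext w; simp; tauto⟩

def pathFin (p p' : ℤ × ℤ) (d : ℕ) : Fin (d + 1) → ℤ × ℤ := fun k => pathF p p' k.val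

lemma upper_aux (p p' : ℤ × ℤ) (hp : IsPurePt p)
    (hdom : (p'.2 - p.2).natAbs ≤ (p'.1 - p.1).natAbs) :
    ∃ A : Set (ℤ × ℤ), IsCOTSArcFromTo khalPlane A p p' ∧
      A.ncard = (p'.1 - p.1).natAbs + 1 := by
  letI : TopologicalSpace ℤ := khal
  letI : TopologicalSpace (ℤ × ℤ) := khalPlane
  set d := (p'.1 - p.1).natAbs with hd
  letI tC : TopologicalSpace (Fin (d + 1)) := khalPlane.induced (pathFin p p' d)
  have hinj : Function.Injective (pathFin p p' d) := by
    intro x y hxy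
    have hx := x.isLt; have hy := y.isLt
    have h1 : gseg p.1 (p'.1 - p.1) x.val = gseg p.1 (p'.1 - p.1) y.val :=
      congrArg Prod.fst hxy
    unfold gseg at h1
    exact Fin.ext (by omega)
  have hemb : @Topology.IsEmbedding _ _ tC khalPlane (pathFin p p' d) := ⟨⟨rfl⟩, hinj⟩
  have hrange : Set.range (pathFin p p' d) = pathF p p' '' Set.Iic d := by
    ext z; constructor
    · rintro ⟨k, rfl⟩; exact ⟨k.val, Set.mem_Iic.mpr (by omega), rfl⟩
    · rintro ⟨n, hn, rfl⟩
      exact ⟨⟨n, by have := Set.mem_Iic.mp hn; omega⟩, rfl⟩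
  have hpreconn : @IsPreconnected _ tC Set.univ := by
    refine (@Topology.IsInducing.isPreconnected_image _ _ tC khalPlane Set.univ
      (pathFin p p' d) hemb.toIsInducing).mp ?_
    rw [Set.image_univ, hrange]
    exact pathF_preconn p p' hp d
  have hconn : @ConnectedSpace _ tC :=
    @ConnectedSpace.mk _ tC (@PreconnectedSpace.mk _ tC hpreconn) ⟨0⟩
  have hcont : @Continuous _ _ tC khal (fun k : Fin (d + 1) => gseg p.1 (p'.1 - p.1) k.val) := by
    have h1 : @Continuous _ _ tC khalPlane (pathFin p p' d) := continuous_induced_dom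
    have h2 : @Continuous _ _ khalPlane khal (Prod.fst : ℤ × ℤ → ℤ) := @continuous_fst ℤ ℤ khal khal
    exact h2.comp h1
  have hinjh : Function.Injective (fun k : Fin (d + 1) => gseg p.1 (p'.1 - p.1) k.val) := by
    intro u v huv; have hu := u.isLt; have hv := v.isLt
    simp only [] at huv; unfold gseg at huv; exact Fin.ext (by omega)
  have hCOTS : IsCOTS tC := by
    refine ⟨hconn, ?_⟩
    intro Y hY
    obtain ⟨x, y, z, hxy, hxz, hyz, rfl⟩ := Set.ncard_eq_three.mp hY
    obtain ⟨a, b, c, hab, hbc, hset⟩ := middle3 hxy hxz hyz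
    have hva : (a : ℕ) < b := hab
    have hvb : (b : ℕ) < c := hbc
    have hc' := c.isLt
    have hd2 : 2 ≤ d := by omega
    have key : @connectedComponentIn _ tC {b}ᶜ a ≠ @connectedComponentIn _ tC {b}ᶜ c := by
      rcases lt_trichotomy (p'.1 - p.1) 0 with hs | hs | hs
      · exact (sep_aux tC (fun k : Fin (d + 1) => gseg p.1 (p'.1 - p.1) k.val) hcont hinjh
          (show gseg p.1 (p'.1 - p.1) c.val < gseg p.1 (p'.1 - p.1) b.val by
            unfold gseg; omega)
          (show gseg p.1 (p'.1 - p.1) b.val < gseg p.1 (p'.1 - p.1) a.val by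
            unfold gseg; omega)).symm
      · exfalso; omega
      · exact sep_aux tC (fun k : Fin (d + 1) => gseg p.1 (p'.1 - p.1) k.val) hcont hinjh
          (show gseg p.1 (p'.1 - p.1) a.val < gseg p.1 (p'.1 - p.1) b.val by
            unfold gseg; omega)
          (show gseg p.1 (p'.1 - p.1) b.val < gseg p.1 (p'.1 - p.1) c.val by
            unfold gseg; omega)
    refine ⟨b, ?_, a, ⟨?_, ?_⟩, c, ⟨?_, ?_⟩, key⟩
    · rw [← hset]; simp
    · rw [← hset]; simp
    · simp only [Set.mem_singleton_iff]; exact fun e => absurd (Fin.val_eq_of_eq e) (by omega)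
    · rw [← hset]; simp
    · simp only [Set.mem_singleton_iff]; exact fun e => absurd (Fin.val_eq_of_eq e) (by omega)
  have hADJ : ∀ x y : Fin (d + 1), Adjacent tC x y →
      ((pathFin p p' d x).1 - (pathFin p p' d y).1).natAbs ≤ 1 := by
    intro x y hxy
    have h := adj_cheb (pathFin p p' d) hxy
    unfold cheb at h
    exact le_trans (le_max_left _ _) h
  have hend0 : IsEndpoint tC (⟨0, by omega⟩ : Fin (d + 1)) := by
    have hsub : adjSet tC (⟨0, by omega⟩ : Fin (d + 1)) ⊆ {(⟨min 1 d, by omega⟩ : Fin (d + 1))} := by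
      intro y hy
      have hb := hADJ _ y hy
      have hyv := y.isLt
      have hy0 : y.val ≠ 0 := fun h0 => hy.1 (Fin.ext h0).symm
      unfold pathFin pathF gseg at hb
      simp only [Fin.val_mk] at hb
      simp only [Set.mem_singleton_iff]
      exact Fin.ext (by simp only [Fin.val_mk]; omega)
    exact le_trans (Set.ncard_le_ncard hsub (Set.finite_singleton _)) (by simp)
  have hend1 : IsEndpoint tC (⟨d, by omega⟩ : Fin (d + 1)) := by
    have hsub : adjSet tC (⟨d, by omega⟩ : Fin (d + 1)) ⊆
        {(⟨d - min 1 d, by omega⟩ : Fin (d + 1))} := by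
      intro y hy
      have hb := hADJ _ y hy
      have hyv := y.isLt
      have hyd : y.val ≠ d := fun h0 => hy.1 (Fin.ext h0).symm
      unfold pathFin pathF gseg at hb
      simp only [Fin.val_mk] at hb
      simp only [Set.mem_singleton_iff]
      exact Fin.ext (by simp only [Fin.val_mk]; omega)
    exact le_trans (Set.ncard_le_ncard hsub (Set.finite_singleton _)) (by simp)
  have hf0 : pathFin p p' d ⟨0, by omega⟩ = p := pathF_zero p p'
  have hf1 : pathFin p p' d ⟨d, by omega⟩ = p' := pathF_of_ge p p' (le_of_eq hd.symm) hdom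
  have hcard : (Set.range (pathFin p p' d)).ncard = d + 1 := by
    rw [← Set.image_univ, Set.ncard_image_of_injective _ hinj, Set.ncard_univ,
      Nat.card_eq_fintype_card, Fintype.card_fin]
  exact ⟨Set.range (pathFin p p' d),
    ⟨Fin (d + 1), tC, inferInstance, hCOTS, pathFin p p' d, hemb, rfl,
      ⟨0, by omega⟩, ⟨d, by omega⟩, hend0, hend1, hf0, hf1⟩, hcard⟩

lemma swap_purePt {p : ℤ × ℤ} (hp : IsPurePt p) : IsPurePt p.swap := by
  rcases hp with ⟨h1, h2⟩ | ⟨h1, h2⟩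
  exacts [Or.inl ⟨h2, h1⟩, Or.inr ⟨h2, h1⟩]

lemma arc_swap {A : Set (ℤ × ℤ)} {x y : ℤ × ℤ} (h : IsCOTSArcFromTo khalPlane A x y) :
    IsCOTSArcFromTo khalPlane (Prod.swap '' A) x.swap y.swap := by
  letI : TopologicalSpace ℤ := khal
  letI : TopologicalSpace (ℤ × ℤ) := khalPlane
  obtain ⟨C, tC, hfin, hcots, f, hemb, hrange, c₀, c₁, he0, he1, hc0, hc1⟩ := h
  have hswap : @Topology.IsEmbedding _ _ khalPlane khalPlane (Prod.swap : ℤ × ℤ → ℤ × ℤ) :=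
    (Homeomorph.prodComm ℤ ℤ).isEmbedding
  exact ⟨C, tC, hfin, hcots, Prod.swap ∘ f, hswap.comp hemb,
    by rw [Set.range_comp, hrange], c₀, c₁, he0, he1,
    by simp [Function.comp, hc0], by simp [Function.comp, hc1]⟩

theorem stmt10' (p p' : ℤ × ℤ) (hp : IsPurePt p) (hp' : IsPurePt p') :
    cotsDist khalPlane p p' =
      ((max (p'.1 - p.1).natAbs (p'.2 - p.2).natAbs : ℕ) : ℕ∞) := by
  set d := max (p'.1 - p.1).natAbs (p'.2 - p.2).natAbs with hd
  apply le_antisymm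
  · have hup : ∃ A : Set (ℤ × ℤ), IsCOTSArcFromTo khalPlane A p p' ∧ A.ncard = d + 1 := by
      rcases le_total (p'.2 - p.2).natAbs (p'.1 - p.1).natAbs with hle | hle
      · obtain ⟨A, hA, hc⟩ := upper_aux p p' hp hle
        exact ⟨A, hA, by rw [hc, hd]; omega⟩
      · obtain ⟨A, hA, hc⟩ := upper_aux p.swap p'.swap (swap_purePt hp) hle
        refine ⟨Prod.swap '' A, arc_swap hA, ?_⟩
        rw [Set.ncard_image_of_injective _ Prod.swap_injective, hc, hd]
        show (p'.2 - p.2).natAbs + 1 = _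
        omega
    obtain ⟨A, hA, hc⟩ := hup
    apply sInf_le
    refine ⟨A, hA, ?_⟩
    rw [hc]; push_cast; ring
  · apply le_sInf
    rintro n ⟨A, ⟨C, tC, hfin, hcots, f, hemb, hrange, c₀, c₁, he0, he1, hc0, hc1⟩, hcard⟩
    letI : TopologicalSpace ℤ := khal
    letI : TopologicalSpace (ℤ × ℤ) := khalPlane
    letI : TopologicalSpace C := tC
    haveI : PreconnectedSpace C := (hcots.1).toPreconnectedSpace
    have hApre : @IsPreconnected _ khalPlane A := by
      rw [← hrange]
      exact isPreconnected_range hemb.continuous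
    have hAfin : A.Finite := hrange ▸ Set.finite_range f
    have hmem_p : p ∈ A := hrange ▸ ⟨c₀, hc0⟩
    have hmem_p' : p' ∈ A := hrange ▸ ⟨c₁, hc1⟩
    have hlow := card_lower hAfin hApre hmem_p hmem_p'
    unfold cheb at hlow
    have hdle : d + 1 ≤ A.ncard := by rw [hd]; omega
    rcases eq_or_ne n ⊤ with rfl | hn
    · exact le_top
    · lift n to ℕ using hn
      have h1 : A.ncard = n + 1 := by exact_mod_cast hcard
      have h2 : d ≤ n := by omega
      exact_mod_cast h2

end KAux

theorem stmt10 (p p' : ℤ × ℤ) (hp : IsPurePt p) (hp' : IsPurePt p') :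
    cotsDist khalPlane p p' =
      ((max (p'.1 - p.1).natAbs (p'.2 - p.2).natAbs : ℕ) : ℕ∞) :=
  KAux.stmt10' p p' hp hp'
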